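/- Let p be a PMF on A, q a PMF on B, x : A, and y : B. Then there exists a coupling of p and q with respect to the relation Φ a b := (a = x → b = y) if and only if p x ≤ q y. (Paper's Theorem 7, Soundness/Completeness of the relational program logic with respect to inequality of probabilities.) -/

import Mathlib

open ENNReal

theorem pmf_coupling_iff_le_prob {A B : Type*} (p : PMF A) (q : PMF B) (x : A) (y : B) :
    (∃ d : PMF (A × B),
        d.map Prod.fst = p ∧ d.map Prod.snd = q ∧
        ∀ z ∈ d.support, (z.1 = x → z.2 = y)) ↔
      p x ≤ q y := by
  classical
  constructor
  · rintro ⟨d, hfst, hsnd, hsupp⟩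
    have hp : p x = d (x, y) := by
      rw [← hfst, PMF.map_apply]
      rw [tsum_eq_single (x, y) fun z h1 => ?_]
      · exact if_pos rfl
      · by_cases h2 : x = z.1
        · have : d z = 0 := by
            by_contra hz
            exact h1 (Prod.ext h2.symm (hsupp z hz h2.symm))
          simp [h2, this]
        · simp [h2]
    have hq : d (x, y) ≤ q y := by
      rw [← hsnd, PMF.map_apply]
      refine le_trans ?_ (ENNReal.le_tsum (x, y))
      simp
    exact hp ▸ hq
  · intro hpq
    by_cases h1 : p x = 1
    · -- degenerate case: p = pure x, q = pure y
      have hq1 : q y = 1 := le_antisymm (q.coe_le_one y) (h1 ▸ hpq)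
      have hps : p.support = {x} := (p.apply_eq_one_iff x).1 h1
      have hqs : q.support = {y} := (q.apply_eq_one_iff y).1 hq1
      have hp : p = PMF.pure x := by
        ext a
        by_cases ha : a = x
        · simp [ha, h1, PMF.pure_apply]
        · have : a ∉ p.support := by rw [hps]; simp [ha]
          rw [PMF.pure_apply, if_neg ha]
          exact (PMF.apply_eq_zero_iff p a).2 this
      have hq : q = PMF.pure y := by
        ext b
        by_cases hb : b = y
        · simp [hb, hq1, PMF.pure_apply]
        · have : b ∉ q.support := by rw [hqs]; simp [hb]
          rw [PMF.pure_apply, if_neg hb]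
          exact (PMF.apply_eq_zero_iff q b).2 this
      refine ⟨PMF.pure (x, y), ?_, ?_, ?_⟩
      · rw [PMF.pure_map, hp]
      · rw [PMF.pure_map, hq]
      · intro z hz
        rw [PMF.support_pure] at hz
        simp_all
    · -- main case: p x < 1
      set c : ℝ≥0∞ := 1 - p x with hc
      have hc0 : c ≠ 0 := by
        rw [hc]
        simp only [ne_eq, tsub_eq_zero_iff_le, not_le]
        exact lt_of_le_of_ne (p.coe_le_one x) h1
      have hcT : c ≠ ⊤ := by
        rw [hc]
        exact ne_top_of_le_ne_top one_ne_top tsub_le_self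
      have hpxT : p x ≠ ⊤ := p.apply_ne_top x
      -- the adjusted distribution
      have hsum : (∑' b, (q b - if b = y then p x else 0)) = c := by
        have he : (∑' b, if b = y then 0 else (q b - if b = y then p x else 0))
            = ∑' b, if b = y then 0 else q b := by
          refine tsum_congr fun b => ?_
          by_cases hb : b = y <;> simp [hb]
        have h2 : (1 : ℝ≥0∞) = q y + ∑' b, if b = y then 0 else q b := by
          rw [← q.tsum_coe, ENNReal.tsum_eq_add_tsum_ite y]
        rw [ENNReal.tsum_eq_add_tsum_ite y]
        simp only [eq_self_iff_true, if_true]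
        rw [he, hc, h2]
        refine ENNReal.eq_sub_of_add_eq hpxT ?_
        rw [add_right_comm, tsub_add_cancel_of_le hpq]
      set q' : PMF B := ⟨fun b => (q b - if b = y then p x else 0) / c, by
        refine ENNReal.summable.hasSum_iff.2 ?_
        simp only [div_eq_mul_inv]
        rw [ENNReal.tsum_mul_right, hsum, ← div_eq_mul_inv, ENNReal.div_self hc0 hcT]⟩ with hq'
      have hq'app : ∀ b, q' b = (q b - if b = y then p x else 0) / c := fun _ => rfl
      refine ⟨p.bind fun a => (if a = x then PMF.pure y else q').map (fun b => (a, b)),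
        ?_, ?_, ?_⟩
      · rw [PMF.map_bind]
        simp only [PMF.map_comp]
        have : ∀ a : A, (Prod.fst ∘ fun b : B => (a, b)) = Function.const B a := fun a => rfl
        simp only [this, PMF.map_const]
        exact p.bind_pure
      · rw [PMF.map_bind]
        simp only [PMF.map_comp]
        have : ∀ a : A, (Prod.snd ∘ fun b : B => (a, b)) = id := fun a => rfl
        simp only [this, PMF.map_id]
        ext b
        rw [PMF.bind_apply]
        have key : ∀ a : A, p a * (if a = x then PMF.pure y else q') b
            = if a = x then p x * PMF.pure y b else p a * q' b := by
          intro a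
          by_cases ha : a = x <;> simp [ha]
        simp only [key]
        rw [ENNReal.tsum_eq_add_tsum_ite x]
        simp only [eq_self_iff_true, if_true]
        have he : (∑' a, if a = x then 0 else if a = x then p x * (PMF.pure y) b else p a * q' b)
            = (∑' a, if a = x then 0 else p a) * q' b := by
          rw [← ENNReal.tsum_mul_right]
          refine tsum_congr fun a => ?_
          by_cases ha : a = x <;> simp [ha]
        rw [he]
        have hrest : (∑' a, if a = x then 0 else p a) = c := by
          have h2 : (1 : ℝ≥0∞) = p x + ∑' a, if a = x then 0 else p a := by
            rw [← p.tsum_coe, ENNReal.tsum_eq_add_tsum_ite x]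
          rw [hc, h2, ENNReal.add_sub_cancel_left hpxT]
        rw [hrest, hq'app, ENNReal.mul_div_cancel hc0 hcT]
        by_cases hb : b = y
        · subst hb
          simp only [PMF.pure_apply_self, mul_one, eq_self_iff_true, if_true]
          exact add_tsub_cancel_of_le hpq
        · simp [PMF.pure_apply, hb]
      · intro z hz hz1
        rw [PMF.support_bind] at hz
        simp only [Set.mem_iUnion] at hz
        obtain ⟨a, _, hza⟩ := hz
        rw [PMF.support_map] at hza
        obtain ⟨b, hb, hzb⟩ := hza
        have hax : a = x := by rw [← hzb] at hz1; exact hz1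
        rw [hax, if_pos rfl, PMF.support_pure] at hb
        rw [← hzb]
        simpa using hb
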